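/- Let f : [0,1) → ℝ be Lebesgue integrable. Then for every j ∈ ℕ and every x ∈ [0,1), the Haar partial sum up to level j equals the dyadic average: ∫₀¹ f(t) dt + Σ_{l=0}^{j−1} Σ_{k=0}^{2^l−1} (∫₀¹ f ψ_{l,k}) * ψ_{l,k}(x) = 2^j ∫_{I_{j,⌊2^j x⌋}} f(t) dt. -/

import Mathlib

open MeasureTheory

/-- The dyadic interval `I_{l,k} = [k 2^{-l}, (k+1) 2^{-l})`. -/
def dyadicI (l k : ℕ) : Set ℝ := Set.Ico ((k : ℝ) / 2 ^ l) (((k : ℝ) + 1) / 2 ^ l)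

/-- The Haar wavelet `ψ_{l,k}(x) = 2^{l/2} (1_{[1/2,1)} - 1_{[0,1/2)})(2^l x - k)`. -/
noncomputable def haar (l k : ℕ) (x : ℝ) : ℝ :=
  2 ^ ((l : ℝ) / 2) *
    ((Set.Ico (1 / 2 : ℝ) 1).indicator 1 (2 ^ l * x - k) -
     (Set.Ico (0 : ℝ) (1 / 2 : ℝ)).indicator 1 (2 ^ l * x - k))

lemma rpow_half_sq (l : ℕ) : (2:ℝ) ^ ((l:ℝ)/2) * 2 ^ ((l:ℝ)/2) = 2 ^ l := by
  have h : (l:ℝ)/2 + (l:ℝ)/2 = (l:ℝ) := by ring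
  rw [← Real.rpow_add (by norm_num : (0:ℝ) < 2), h, Real.rpow_natCast]

lemma mem_dyadic_iff (l k : ℕ) (x : ℝ) :
    x ∈ dyadicI l k ↔ (2:ℝ) ^ l * x - k ∈ Set.Ico (0:ℝ) 1 := by
  have h2 : (0:ℝ) < 2 ^ l := by positivity
  simp only [dyadicI, Set.mem_Ico]
  constructor <;> rintro ⟨h1, h2'⟩ <;> constructor
  · nlinarith [(div_le_iff₀ h2).mp h1]
  · nlinarith [(lt_div_iff₀ h2).mp h2']
  · rw [div_le_iff₀ h2]; nlinarith
  · rw [lt_div_iff₀ h2]; nlinarith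

lemma mem_left_iff (l k : ℕ) (x : ℝ) :
    x ∈ dyadicI (l+1) (2*k) ↔ (2:ℝ) ^ l * x - k ∈ Set.Ico (0:ℝ) (1/2) := by
  rw [mem_dyadic_iff]
  have h : (2:ℝ) ^ (l+1) * x - ((2*k : ℕ) : ℝ) = 2 * ((2:ℝ) ^ l * x - k) := by
    push_cast; ring
  rw [h]
  simp only [Set.mem_Ico]
  constructor <;> rintro ⟨h1, h2⟩ <;> exact ⟨by linarith, by linarith⟩

lemma mem_right_iff (l k : ℕ) (x : ℝ) :
    x ∈ dyadicI (l+1) (2*k+1) ↔ (2:ℝ) ^ l * x - k ∈ Set.Ico (1/2:ℝ) 1 := by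
  rw [mem_dyadic_iff]
  have h : (2:ℝ) ^ (l+1) * x - ((2*k+1 : ℕ) : ℝ) = 2 * ((2:ℝ) ^ l * x - k) - 1 := by
    push_cast; ring
  rw [h]
  simp only [Set.mem_Ico]
  constructor <;> rintro ⟨h1, h2⟩ <;> exact ⟨by linarith, by linarith⟩

lemma haar_of_not_mem {l k : ℕ} {x : ℝ} (h : x ∉ dyadicI l k) : haar l k x = 0 := by
  rw [mem_dyadic_iff, Set.mem_Ico, not_and_or, not_le, not_lt] at h
  have hL : (2:ℝ) ^ l * x - k ∉ Set.Ico (0:ℝ) (1/2) := by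
    simp only [Set.mem_Ico, not_and_or, not_le, not_lt]
    rcases h with h | h
    · exact Or.inl h
    · right; linarith
  have hR : (2:ℝ) ^ l * x - k ∉ Set.Ico (1/2:ℝ) 1 := by
    simp only [Set.mem_Ico, not_and_or, not_le, not_lt]
    rcases h with h | h
    · left; linarith
    · exact Or.inr h
  unfold haar
  rw [Set.indicator_of_notMem hL, Set.indicator_of_notMem hR]
  ring

lemma haar_of_mem_left {l k : ℕ} {x : ℝ} (h : x ∈ dyadicI (l+1) (2*k)) :
    haar l k x = -(2 ^ ((l:ℝ)/2)) := by
  rw [mem_left_iff] at h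
  have hR : (2:ℝ) ^ l * x - k ∉ Set.Ico (1/2:ℝ) 1 := by
    simp only [Set.mem_Ico, not_and_or, not_le, not_lt]
    left; exact h.2
  unfold haar
  rw [Set.indicator_of_mem h, Set.indicator_of_notMem hR]
  simp

lemma haar_of_mem_right {l k : ℕ} {x : ℝ} (h : x ∈ dyadicI (l+1) (2*k+1)) :
    haar l k x = 2 ^ ((l:ℝ)/2) := by
  rw [mem_right_iff] at h
  have hL : (2:ℝ) ^ l * x - k ∉ Set.Ico (0:ℝ) (1/2) := by
    simp only [Set.mem_Ico, not_and_or, not_le, not_lt]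
    right; exact h.1
  unfold haar
  rw [Set.indicator_of_mem h, Set.indicator_of_notMem hL]
  simp

lemma dyadic_split (l k : ℕ) :
    dyadicI l k = dyadicI (l+1) (2*k) ∪ dyadicI (l+1) (2*k+1) := by
  have h2 : (0:ℝ) < 2 ^ l := by positivity
  ext t
  rw [Set.mem_union, mem_dyadic_iff, mem_left_iff, mem_right_iff]
  simp only [Set.mem_Ico]
  constructor
  · rintro ⟨h1, h2'⟩
    rcases lt_or_ge (2 ^ l * t - k) (1/2 : ℝ) with h | h
    · exact Or.inl ⟨h1, h⟩
    · exact Or.inr ⟨h, h2'⟩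
  · rintro (⟨h1, h2'⟩ | ⟨h1, h2'⟩) <;> constructor <;> linarith

lemma dyadic_disjoint (l k : ℕ) :
    Disjoint (dyadicI (l+1) (2*k)) (dyadicI (l+1) (2*k+1)) := by
  rw [Set.disjoint_left]
  intro a ha hb
  rw [mem_left_iff] at ha
  rw [mem_right_iff] at hb
  simp only [Set.mem_Ico] at ha hb
  linarith [ha.2, hb.1]

lemma dyadic_subset {l k : ℕ} (hk : k < 2 ^ l) : dyadicI l k ⊆ Set.Ico (0:ℝ) 1 := by
  intro t ht
  rw [mem_dyadic_iff, Set.mem_Ico] at ht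
  have h2 : (0:ℝ) < 2 ^ l := by positivity
  have hk' : (k:ℝ) + 1 ≤ 2 ^ l := by exact_mod_cast hk
  have hk0 : (0:ℝ) ≤ k := Nat.cast_nonneg k
  constructor
  · nlinarith [ht.1]
  · nlinarith [ht.2]

lemma dyadic_measurable (l k : ℕ) : MeasurableSet (dyadicI l k) := measurableSet_Ico

lemma floor_eq_of_mem {l k : ℕ} {x : ℝ} (hx : 0 ≤ x) (h : x ∈ dyadicI l k) :
    ⌊2 ^ l * x⌋₊ = k := by
  rw [mem_dyadic_iff, Set.mem_Ico] at h
  exact Nat.floor_eq_iff (by positivity : (0:ℝ) ≤ 2 ^ l * x) |>.mpr ⟨by linarith, by push_cast; linarith⟩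

lemma mem_of_floor {l : ℕ} {x : ℝ} (hx : x ∈ Set.Ico (0:ℝ) 1) :
    x ∈ dyadicI l ⌊2 ^ l * x⌋₊ := by
  obtain ⟨hx0, hx1⟩ := hx
  have h0 : (0:ℝ) ≤ 2 ^ l * x := by positivity
  rw [mem_dyadic_iff, Set.mem_Ico]
  constructor
  · have := Nat.floor_le h0; linarith
  · have := Nat.lt_floor_add_one (2 ^ l * x); push_cast at this; linarith

lemma floor_lt {l : ℕ} {x : ℝ} (hx : x ∈ Set.Ico (0:ℝ) 1) : ⌊2 ^ l * x⌋₊ < 2 ^ l := by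
  obtain ⟨hx0, hx1⟩ := hx
  have h2 : (0:ℝ) < 2 ^ l := by positivity
  have h : (2:ℝ) ^ l * x < ((2 ^ l : ℕ) : ℝ) := by push_cast; nlinarith
  exact Nat.floor_lt (by positivity : (0:ℝ) ≤ 2 ^ l * x) |>.mpr h

/-- The key integral formula for `∫ f ψ_{l,k}`. -/
lemma integral_mul_haar (f : ℝ → ℝ) (hf : IntegrableOn f (Set.Ico (0:ℝ) 1))
    (l k : ℕ) (hk : k < 2 ^ l) :
    ∫ t in Set.Ico (0:ℝ) 1, f t * haar l k t =
      2 ^ ((l:ℝ)/2) *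
        ((∫ t in dyadicI (l+1) (2*k+1), f t) - ∫ t in dyadicI (l+1) (2*k), f t) := by
  have hkL : 2*k < 2 ^ (l+1) := by omega
  have hkR : 2*k+1 < 2 ^ (l+1) := by omega
  have hLsub : dyadicI (l+1) (2*k) ⊆ Set.Ico (0:ℝ) 1 := dyadic_subset hkL
  have hRsub : dyadicI (l+1) (2*k+1) ⊆ Set.Ico (0:ℝ) 1 := dyadic_subset hkR
  have hfL : IntegrableOn f (dyadicI (l+1) (2*k)) := hf.mono_set hLsub
  have hfR : IntegrableOn f (dyadicI (l+1) (2*k+1)) := hf.mono_set hRsub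
  have hpt : ∀ t, f t * haar l k t =
      2 ^ ((l:ℝ)/2) * ((dyadicI (l+1) (2*k+1)).indicator f t -
        (dyadicI (l+1) (2*k)).indicator f t) := by
    intro t
    by_cases hL : t ∈ dyadicI (l+1) (2*k)
    · have hR : t ∉ dyadicI (l+1) (2*k+1) :=
        fun hR => (dyadic_disjoint l k).le_bot ⟨hL, hR⟩
      rw [haar_of_mem_left hL, Set.indicator_of_mem hL, Set.indicator_of_notMem hR]
      ring
    · by_cases hR : t ∈ dyadicI (l+1) (2*k+1)
      · rw [haar_of_mem_right hR, Set.indicator_of_mem hR, Set.indicator_of_notMem hL]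
        ring
      · have hnot : t ∉ dyadicI l k := by
          rw [dyadic_split l k]; simp [hL, hR]
        rw [haar_of_not_mem hnot, Set.indicator_of_notMem hL, Set.indicator_of_notMem hR]
        ring
  simp only [hpt]
  rw [integral_const_mul]
  congr 1
  have hIL : Integrable ((dyadicI (l+1) (2*k)).indicator f)
      (volume.restrict (Set.Ico (0:ℝ) 1)) :=
    ((integrable_indicator_iff (dyadic_measurable _ _)).mpr hfL).restrict
  have hIR : Integrable ((dyadicI (l+1) (2*k+1)).indicator f)
      (volume.restrict (Set.Ico (0:ℝ) 1)) :=
    ((integrable_indicator_iff (dyadic_measurable _ _)).mpr hfR).restrict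
  rw [integral_sub hIR hIL, setIntegral_indicator (dyadic_measurable _ _),
    setIntegral_indicator (dyadic_measurable _ _),
    Set.inter_eq_self_of_subset_right hLsub, Set.inter_eq_self_of_subset_right hRsub]

/-- Single refinement step. -/
lemma step (f : ℝ → ℝ) (hf : IntegrableOn f (Set.Ico (0:ℝ) 1))
    (l : ℕ) (x : ℝ) (hx : x ∈ Set.Ico (0:ℝ) 1) :
    2 ^ l * (∫ t in dyadicI l ⌊2 ^ l * x⌋₊, f t) +
      ∑ k ∈ Finset.range (2 ^ l),
        (∫ t in Set.Ico (0:ℝ) 1, f t * haar l k t) * haar l k x =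
      2 ^ (l+1) * ∫ t in dyadicI (l+1) ⌊2 ^ (l+1) * x⌋₊, f t := by
  set k := ⌊2 ^ l * x⌋₊ with hkdef
  have hk : k < 2 ^ l := floor_lt hx
  have hxk : x ∈ dyadicI l k := mem_of_floor hx
  -- collapse the sum to the single term `k`
  have hsum : ∑ k' ∈ Finset.range (2 ^ l),
      (∫ t in Set.Ico (0:ℝ) 1, f t * haar l k' t) * haar l k' x =
      (∫ t in Set.Ico (0:ℝ) 1, f t * haar l k t) * haar l k x := by
    apply Finset.sum_eq_single_of_mem k (Finset.mem_range.mpr hk)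
    intro k' _ hne
    have : x ∉ dyadicI l k' := fun h => hne (by rw [← floor_eq_of_mem hx.1 h])
    rw [haar_of_not_mem this, mul_zero]
  rw [hsum, integral_mul_haar f hf l k hk]
  -- split the level-l integral
  have hkL : 2*k < 2 ^ (l+1) := by omega
  have hkR : 2*k+1 < 2 ^ (l+1) := by omega
  have hfL : IntegrableOn f (dyadicI (l+1) (2*k)) := hf.mono_set (dyadic_subset hkL)
  have hfR : IntegrableOn f (dyadicI (l+1) (2*k+1)) := hf.mono_set (dyadic_subset hkR)
  have hsplit : ∫ t in dyadicI l k, f t =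
      (∫ t in dyadicI (l+1) (2*k), f t) + ∫ t in dyadicI (l+1) (2*k+1), f t := by
    rw [dyadic_split l k]
    exact setIntegral_union (dyadic_disjoint l k) (dyadic_measurable _ _) hfL hfR
  have hsq := rpow_half_sq l
  rcases (Set.mem_union x _ _).mp ((dyadic_split l k) ▸ hxk) with hL | hR
  · rw [floor_eq_of_mem hx.1 hL, haar_of_mem_left hL, hsplit, pow_succ]
    linear_combination ((∫ t in dyadicI (l+1) (2*k), f t) -
      (∫ t in dyadicI (l+1) (2*k+1), f t)) * hsq
  · rw [floor_eq_of_mem hx.1 hR, haar_of_mem_right hR, hsplit, pow_succ]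
    linear_combination ((∫ t in dyadicI (l+1) (2*k+1), f t) -
      (∫ t in dyadicI (l+1) (2*k), f t)) * hsq

/-- For `f` Lebesgue integrable on `[0,1)`, every `j ∈ ℕ` and `x ∈ [0,1)`,
the Haar partial sum up to level `j` equals the level-`j` dyadic average:
`∫₀¹ f + Σ_{l<j} Σ_{k<2^l} (∫₀¹ f ψ_{l,k}) ψ_{l,k}(x) = 2^j ∫_{I_{j,⌊2^j x⌋}} f`. -/
theorem stmt_5 (f : ℝ → ℝ) (hf : IntegrableOn f (Set.Ico (0 : ℝ) 1))
    (j : ℕ) (x : ℝ) (hx : x ∈ Set.Ico (0 : ℝ) 1) :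
    (∫ t in Set.Ico (0 : ℝ) 1, f t) +
      ∑ l ∈ Finset.range j, ∑ k ∈ Finset.range (2 ^ l),
        (∫ t in Set.Ico (0 : ℝ) 1, f t * haar l k t) * haar l k x =
      2 ^ j * ∫ t in dyadicI j ⌊2 ^ j * x⌋₊, f t := by
  induction j with
  | zero =>
      have h0 : ⌊(2:ℝ) ^ 0 * x⌋₊ = 0 := by
        rw [pow_zero, one_mul]
        exact Nat.floor_eq_zero.mpr hx.2
      rw [h0]
      have hI : dyadicI 0 0 = Set.Ico (0:ℝ) 1 := by
        simp [dyadicI]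
      simp [hI]
  | succ j ih =>
      rw [Finset.sum_range_succ, ← add_assoc, ih]
      exact step f hf j x hx
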